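/- (Matrix S-lemma) Let H ∈ S^{p×p} and Q ∈ S^{n×n} be real symmetric matrices with p ≤ n. The set {X ∈ ℝ^{n×p} : tr(HXᵀQX) < 0, XᵀX = I_p} is empty if and only if there exist M ∈ S^{p×p} and W ∈ S^{n×n} with W ⪰ 0 such that tr(HXᵀQX) + tr(M(XᵀX − I_p)) + tr(W(XXᵀ − I_n)) ≥ 0 for all X ∈ ℝ^{n×p}. -/

import Mathlib

open Matrix Finset



noncomputable def zfun (a b : ℕ → ℝ) (i : ℕ) : ℝ :=
  ∑ l ∈ Finset.range i, (a (l+1) - a l) * b l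

lemma zfun_le (a b : ℕ → ℝ) (ha : ∀ k, a (k+1) ≤ a k) (hb : Monotone b)
    (t s : ℕ) : zfun a b t - zfun a b s ≤ (a t - a s) * b s := by
  have hante : Antitone a := antitone_nat_of_succ_le ha
  rcases le_total s t with h | h
  · have h1 : zfun a b t - zfun a b s = ∑ l ∈ Finset.Ico s t, (a (l+1) - a l) * b l := by
      unfold zfun
      rw [Finset.sum_Ico_eq_sub _ h]
    have h2 : ∑ l ∈ Finset.Ico s t, (a (l+1) - a l) * b l
        ≤ ∑ l ∈ Finset.Ico s t, (a (l+1) - a l) * b s := by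
      apply Finset.sum_le_sum
      intro l hl
      have hl' := Finset.mem_Ico.mp hl
      have : a (l+1) - a l ≤ 0 := by linarith [ha l]
      have : b s ≤ b l := hb hl'.1
      nlinarith [ha l]
    have h3 : ∑ l ∈ Finset.Ico s t, (a (l+1) - a l) * b s = (a t - a s) * b s := by
      rw [← Finset.sum_mul]
      congr 1
      rw [Finset.sum_Ico_eq_sub _ h, Finset.sum_range_sub, Finset.sum_range_sub]
      ring
    linarith
  · have h1 : zfun a b s - zfun a b t = ∑ l ∈ Finset.Ico t s, (a (l+1) - a l) * b l := by
      unfold zfun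
      rw [Finset.sum_Ico_eq_sub _ h]
    have h2 : ∑ l ∈ Finset.Ico t s, (a (l+1) - a l) * b s
        ≤ ∑ l ∈ Finset.Ico t s, (a (l+1) - a l) * b l := by
      apply Finset.sum_le_sum
      intro l hl
      have hl' := Finset.mem_Ico.mp hl
      have h4 : a (l+1) - a l ≤ 0 := by linarith [ha l]
      have h5 : b l ≤ b s := hb (le_of_lt hl'.2)
      nlinarith
    have h3 : ∑ l ∈ Finset.Ico t s, (a (l+1) - a l) * b s = (a s - a t) * b s := by
      rw [← Finset.sum_mul]
      congr 1
      rw [Finset.sum_Ico_eq_sub _ h, Finset.sum_range_sub, Finset.sum_range_sub]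
      ring
    linarith



lemma tr1 {n p : ℕ} (lam : Fin n → ℝ) (mu : Fin p → ℝ) (Y : Matrix (Fin n) (Fin p) ℝ) :
    (diagonal mu * Yᵀ * diagonal lam * Y).trace
      = ∑ j, ∑ i, mu j * (lam i * (Y i j * Y i j)) := by
  have h : diagonal mu * Yᵀ * diagonal lam * Y = diagonal mu * (Yᵀ * (diagonal lam * Y)) := by
    rw [Matrix.mul_assoc, Matrix.mul_assoc]
  rw [h, Matrix.trace]
  apply Finset.sum_congr rfl
  intro j _
  rw [Matrix.diag_apply, Matrix.diagonal_mul, Matrix.mul_apply]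
  rw [Finset.mul_sum]
  apply Finset.sum_congr rfl
  intro i _
  rw [Matrix.diagonal_mul, Matrix.transpose_apply]
  ring

lemma tr2 {n p : ℕ} (m : Fin p → ℝ) (Y : Matrix (Fin n) (Fin p) ℝ) :
    (diagonal m * (Yᵀ * Y - 1)).trace = ∑ j, m j * ((∑ i, Y i j * Y i j) - 1) := by
  rw [Matrix.trace]
  apply Finset.sum_congr rfl
  intro j _
  rw [Matrix.diag_apply, Matrix.diagonal_mul]
  congr 1
  rw [Matrix.sub_apply, Matrix.mul_apply, Matrix.one_apply_eq]
  simp [Matrix.transpose_apply]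

lemma tr3 {n p : ℕ} (w : Fin n → ℝ) (Y : Matrix (Fin n) (Fin p) ℝ) :
    (diagonal w * (Y * Yᵀ - 1)).trace = ∑ i, w i * ((∑ j, Y i j * Y i j) - 1) := by
  rw [Matrix.trace]
  apply Finset.sum_congr rfl
  intro i _
  rw [Matrix.diag_apply, Matrix.diagonal_mul]
  congr 1
  rw [Matrix.sub_apply, Matrix.mul_apply, Matrix.one_apply_eq]
  simp [Matrix.transpose_apply]

lemma diag_ineq {n p : ℕ} (lam : Fin n → ℝ) (mu m : Fin p → ℝ) (w : Fin n → ℝ)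
    (hfeas : ∀ (i : Fin n) (j : Fin p), 0 ≤ lam i * mu j + m j + w i)
    (hsum : ∑ j, m j + ∑ i, w i ≤ 0) (Y : Matrix (Fin n) (Fin p) ℝ) :
    0 ≤ (diagonal mu * Yᵀ * diagonal lam * Y).trace
        + (diagonal m * (Yᵀ * Y - 1)).trace + (diagonal w * (Y * Yᵀ - 1)).trace := by
  rw [tr1, tr2, tr3]
  have e1 : ∑ j, m j * ((∑ i, Y i j * Y i j) - 1)
      = (∑ j, ∑ i, m j * (Y i j * Y i j)) - ∑ j, m j := by
    rw [← Finset.sum_sub_distrib]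
    apply Finset.sum_congr rfl
    intro j _
    rw [mul_sub, Finset.mul_sum, mul_one]
  have e2 : ∑ i, w i * ((∑ j, Y i j * Y i j) - 1)
      = (∑ i, ∑ j, w i * (Y i j * Y i j)) - ∑ i, w i := by
    rw [← Finset.sum_sub_distrib]
    apply Finset.sum_congr rfl
    intro i _
    rw [mul_sub, Finset.mul_sum, mul_one]
  have swap : ∑ i, ∑ j, w i * (Y i j * Y i j) = ∑ j, ∑ i, w i * (Y i j * Y i j) :=
    Finset.sum_comm
  have e3 : ∑ j, ∑ i, (lam i * mu j + m j + w i) * (Y i j * Y i j)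
      = ∑ j, (∑ i, mu j * (lam i * (Y i j * Y i j)))
        + (∑ j, ∑ i, m j * (Y i j * Y i j)) + (∑ j, ∑ i, w i * (Y i j * Y i j)) := by
    rw [← Finset.sum_add_distrib, ← Finset.sum_add_distrib]
    apply Finset.sum_congr rfl
    intro j _
    rw [← Finset.sum_add_distrib, ← Finset.sum_add_distrib]
    apply Finset.sum_congr rfl
    intro i _
    ring
  have h1 : 0 ≤ ∑ j, ∑ i, (lam i * mu j + m j + w i) * (Y i j * Y i j) := by
    apply Finset.sum_nonneg; intro j _
    apply Finset.sum_nonneg; intro i _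
    exact mul_nonneg (hfeas i j) (mul_self_nonneg _)
  rw [e3] at h1
  rw [e1, e2]
  linarith [h1, swap]



lemma real_spectral {k : ℕ} (A : Matrix (Fin k) (Fin k) ℝ) (hA : A.IsHermitian) :
    ∃ U : Matrix (Fin k) (Fin k) ℝ, Uᵀ * U = 1 ∧ U * Uᵀ = 1 ∧
      A = U * diagonal hA.eigenvalues * Uᵀ := by
  refine ⟨(hA.eigenvectorUnitary : Matrix (Fin k) (Fin k) ℝ), ?_, ?_, ?_⟩
  · rw [← Matrix.conjTranspose_eq_transpose_of_trivial]
    exact Matrix.mem_unitaryGroup_iff'.mp (hA.eigenvectorUnitary).2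
  · rw [← Matrix.conjTranspose_eq_transpose_of_trivial]
    exact Matrix.mem_unitaryGroup_iff.mp (hA.eigenvectorUnitary).2
  · have h := hA.spectral_theorem
    rw [← Matrix.conjTranspose_eq_transpose_of_trivial]
    exact h

lemma trace_sq_nonneg {k l : ℕ} (A : Matrix (Fin k) (Fin l) ℝ) : 0 ≤ (A * Aᵀ).trace := by
  rw [Matrix.trace]
  apply Finset.sum_nonneg
  intro i _
  rw [Matrix.diag_apply, Matrix.mul_apply]
  apply Finset.sum_nonneg
  intro j _
  rw [Matrix.transpose_apply]
  exact mul_self_nonneg _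

lemma psd_term_nonpos {n p : ℕ} (W : Matrix (Fin n) (Fin n) ℝ) (hW : W.PosSemidef)
    (X : Matrix (Fin n) (Fin p) ℝ) (hX : Xᵀ * X = 1) :
    (W * (X * Xᵀ - 1)).trace ≤ 0 := by
  obtain ⟨B, hB⟩ : ∃ B : Matrix (Fin n) (Fin n) ℝ, W = Bᴴ * B := by
    open scoped MatrixOrder in
    refine ⟨CFC.sqrt W, ?_⟩
    have h1 : (CFC.sqrt W)ᴴ = CFC.sqrt W := (CFC.sqrt_nonneg W).isSelfAdjoint.star_eq
    rw [h1, CFC.sqrt_mul_sqrt_self W hW.nonneg]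
  rw [Matrix.conjTranspose_eq_transpose_of_trivial] at hB
  set D : Matrix (Fin n) (Fin n) ℝ := 1 - X * Xᵀ with hD
  have hPP : (X * Xᵀ) * (X * Xᵀ) = X * Xᵀ := by
    rw [Matrix.mul_assoc, ← Matrix.mul_assoc Xᵀ X Xᵀ, hX, Matrix.one_mul]
  have hDT : Dᵀ = D := by
    rw [hD, Matrix.transpose_sub, Matrix.transpose_one, Matrix.transpose_mul,
      Matrix.transpose_transpose]
  have hP : X * Xᵀ - 1 = -(D * Dᵀ) := by
    rw [hDT, hD]
    simp only [Matrix.sub_mul, Matrix.mul_sub, Matrix.one_mul, Matrix.mul_one, hPP]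
    abel
  rw [hB, hP]
  have key : Bᵀ * B * -(D * Dᵀ) = -(Bᵀ * (B * D * Dᵀ)) := by
    rw [mul_neg, neg_inj]
    simp only [Matrix.mul_assoc]
  rw [key, Matrix.trace_neg, neg_nonpos]
  rw [Matrix.trace_mul_comm]
  rw [Matrix.mul_assoc (B*D) Dᵀ Bᵀ, ← Matrix.transpose_mul]
  exact trace_sq_nonneg (B * D)



lemma trans1 {n p : ℕ} (U : Matrix (Fin n) (Fin n) ℝ) (V : Matrix (Fin p) (Fin p) ℝ)
    (D1 : Matrix (Fin p) (Fin p) ℝ) (D2 : Matrix (Fin n) (Fin n) ℝ)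
    (X : Matrix (Fin n) (Fin p) ℝ) :
    (D1 * (Uᵀ * X * V)ᵀ * D2 * (Uᵀ * X * V)).trace
      = (V * D1 * Vᵀ * Xᵀ * (U * D2 * Uᵀ) * X).trace := by
  have hY : (Uᵀ * X * V)ᵀ = Vᵀ * (Xᵀ * U) := by
    rw [Matrix.transpose_mul, Matrix.transpose_mul, Matrix.transpose_transpose]
  calc (D1 * (Uᵀ * X * V)ᵀ * D2 * (Uᵀ * X * V)).trace
      = ((D1 * (Uᵀ * X * V)ᵀ * D2 * (Uᵀ * X)) * V).trace := by
        simp only [Matrix.mul_assoc]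
    _ = (V * (D1 * (Uᵀ * X * V)ᵀ * D2 * (Uᵀ * X))).trace := Matrix.trace_mul_comm _ _
    _ = (V * D1 * Vᵀ * Xᵀ * (U * D2 * Uᵀ) * X).trace := by
        rw [hY]; simp only [Matrix.mul_assoc]

lemma trans2 {n p : ℕ} (U : Matrix (Fin n) (Fin n) ℝ) (V : Matrix (Fin p) (Fin p) ℝ)
    (hU2 : U * Uᵀ = 1) (hV1 : Vᵀ * V = 1)
    (D1 : Matrix (Fin p) (Fin p) ℝ) (X : Matrix (Fin n) (Fin p) ℝ) :
    (D1 * ((Uᵀ * X * V)ᵀ * (Uᵀ * X * V) - 1)).trace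
      = (V * D1 * Vᵀ * (Xᵀ * X - 1)).trace := by
  have hYY : (Uᵀ * X * V)ᵀ * (Uᵀ * X * V) = Vᵀ * ((Xᵀ * X) * V) := by
    rw [Matrix.transpose_mul, Matrix.transpose_mul, Matrix.transpose_transpose]
    calc Vᵀ * (Xᵀ * Uᵀᵀ) * (Uᵀ * X * V)
        = Vᵀ * (Xᵀ * ((U * Uᵀ) * (X * V))) := by
          rw [Matrix.transpose_transpose]; simp only [Matrix.mul_assoc]
      _ = Vᵀ * ((Xᵀ * X) * V) := by rw [hU2, Matrix.one_mul, Matrix.mul_assoc]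
  have hsub : (Uᵀ * X * V)ᵀ * (Uᵀ * X * V) - 1 = Vᵀ * ((Xᵀ * X - 1) * V) := by
    rw [hYY, Matrix.sub_mul, Matrix.mul_sub, Matrix.one_mul, hV1]
  rw [hsub]
  calc (D1 * (Vᵀ * ((Xᵀ * X - 1) * V))).trace
      = ((D1 * Vᵀ * (Xᵀ * X - 1)) * V).trace := by simp only [Matrix.mul_assoc]
    _ = (V * (D1 * Vᵀ * (Xᵀ * X - 1))).trace := Matrix.trace_mul_comm _ _
    _ = (V * D1 * Vᵀ * (Xᵀ * X - 1)).trace := by simp only [Matrix.mul_assoc]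

lemma trans3 {n p : ℕ} (U : Matrix (Fin n) (Fin n) ℝ) (V : Matrix (Fin p) (Fin p) ℝ)
    (hU1 : Uᵀ * U = 1) (hV2 : V * Vᵀ = 1)
    (D2 : Matrix (Fin n) (Fin n) ℝ) (X : Matrix (Fin n) (Fin p) ℝ) :
    (D2 * ((Uᵀ * X * V) * (Uᵀ * X * V)ᵀ - 1)).trace
      = (U * D2 * Uᵀ * (X * Xᵀ - 1)).trace := by
  have hYY : (Uᵀ * X * V) * (Uᵀ * X * V)ᵀ = Uᵀ * ((X * Xᵀ) * U) := by
    rw [Matrix.transpose_mul, Matrix.transpose_mul, Matrix.transpose_transpose]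
    calc Uᵀ * X * V * (Vᵀ * (Xᵀ * Uᵀᵀ))
        = Uᵀ * (X * ((V * Vᵀ) * (Xᵀ * U))) := by
          rw [Matrix.transpose_transpose]; simp only [Matrix.mul_assoc]
      _ = Uᵀ * ((X * Xᵀ) * U) := by rw [hV2, Matrix.one_mul, Matrix.mul_assoc]
  have hsub : (Uᵀ * X * V) * (Uᵀ * X * V)ᵀ - 1 = Uᵀ * ((X * Xᵀ - 1) * U) := by
    rw [hYY, Matrix.sub_mul, Matrix.mul_sub, Matrix.one_mul, hU1]
  rw [hsub]
  calc (D2 * (Uᵀ * ((X * Xᵀ - 1) * U))).trace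
      = ((D2 * Uᵀ * (X * Xᵀ - 1)) * U).trace := by simp only [Matrix.mul_assoc]
    _ = (U * (D2 * Uᵀ * (X * Xᵀ - 1))).trace := Matrix.trace_mul_comm _ _
    _ = (U * D2 * Uᵀ * (X * Xᵀ - 1)).trace := by simp only [Matrix.mul_assoc]



lemma perm_orth {n p : ℕ} (σ : Fin p → Fin n) (hσ : Function.Injective σ) :
    (Matrix.of fun (i : Fin n) (j : Fin p) => if σ j = i then (1:ℝ) else 0)ᵀ *
      (Matrix.of fun (i : Fin n) (j : Fin p) => if σ j = i then (1:ℝ) else 0) = 1 := by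
  ext j k
  rw [Matrix.mul_apply, Matrix.one_apply]
  simp only [Matrix.transpose_apply, Matrix.of_apply]
  rcases eq_or_ne j k with h | h
  · subst h
    simp
  · have : σ j ≠ σ k := fun hc => h (hσ hc)
    rw [if_neg h]
    apply Finset.sum_eq_zero
    intro i _
    rcases eq_or_ne (σ j) i with h1 | h1
    · have h2 : σ k ≠ i := fun hc => this (h1.trans hc.symm)
      rw [if_neg h2, mul_zero]
    · rw [if_neg h1, zero_mul]

lemma perm_trace {n p : ℕ} (σ : Fin p → Fin n) (lam : Fin n → ℝ) (mu : Fin p → ℝ) :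
    ∑ j, ∑ i, mu j * (lam i * (((Matrix.of fun (i : Fin n) (j : Fin p) => if σ j = i then (1:ℝ) else 0)) i j *
      ((Matrix.of fun (i : Fin n) (j : Fin p) => if σ j = i then (1:ℝ) else 0)) i j))
      = ∑ j, mu j * lam (σ j) := by
  apply Finset.sum_congr rfl
  intro j _
  simp only [Matrix.of_apply]
  rw [← Finset.mul_sum]
  congr 1
  have : ∀ i : Fin n, lam i * ((if σ j = i then (1:ℝ) else 0) * if σ j = i then (1:ℝ) else 0)
      = if σ j = i then lam i else 0 := fun i => by split <;> simp
  rw [Finset.sum_congr rfl (fun i _ => this i)]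
  simp





lemma core_dual {n p : ℕ} (hp : p ≤ n) (lam : Fin n → ℝ) (mu : Fin p → ℝ)
    (h : ∀ σ : Fin p → Fin n, Function.Injective σ → 0 ≤ ∑ j, mu j * lam (σ j)) :
    ∃ (m : Fin p → ℝ) (w : Fin n → ℝ), (∀ i, 0 ≤ w i) ∧
      (∀ (i : Fin n) (j : Fin p), 0 ≤ lam i * mu j + m j + w i) ∧
      (∑ j, m j + ∑ i, w i ≤ 0) := by
  rcases Nat.eq_zero_or_pos n with hn | hn
  · subst hn
    interval_cases p
    exact ⟨0, 0, fun i => i.elim0, fun i => i.elim0, by simp⟩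
  -- extended mu
  set μt : Fin n → ℝ := fun i => if h : (i : ℕ) < p then mu ⟨i, h⟩ else 0 with hμt
  set τ : Equiv.Perm (Fin n) := Tuple.sort μt with hτ
  set ρ : Equiv.Perm (Fin n) := Tuple.sort (fun i => -lam i) with hρ
  have hbmono : Monotone (μt ∘ τ) := Tuple.monotone_sort μt
  have hamono : Monotone ((fun i => -lam i) ∘ ρ) := Tuple.monotone_sort _
  -- ℕ extensions
  set a : ℕ → ℝ := fun l => lam (ρ ⟨min l (n-1), by omega⟩) with haa
  set b : ℕ → ℝ := fun l => μt (τ ⟨min l (n-1), by omega⟩) with hbb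
  have hfin : ∀ (s : Fin n), (⟨min (s:ℕ) (n-1), by omega⟩ : Fin n) = s := by
    intro s
    ext
    simp only []
    omega
  have ha' : ∀ s : Fin n, a (s : ℕ) = lam (ρ s) := fun s => by
    simp only [haa, hfin]
  have hb' : ∀ s : Fin n, b (s : ℕ) = μt (τ s) := fun s => by
    simp only [hbb, hfin]
  have hadec : ∀ k, a (k+1) ≤ a k := by
    intro k
    have : (⟨min k (n-1), by omega⟩ : Fin n) ≤ ⟨min (k+1) (n-1), by omega⟩ := by
      exact Fin.mk_le_mk.mpr (by omega)
    simpa using hamono this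
  have hbmon : Monotone b := by
    intro k l hkl
    have : (⟨min k (n-1), by omega⟩ : Fin n) ≤ ⟨min l (n-1), by omega⟩ := by
      exact Fin.mk_le_mk.mpr (by omega)
    exact hbmono this
  set z : ℕ → ℝ := zfun a b with hz
  have key : ∀ t s : ℕ, z t - z s ≤ (a t - a s) * b s := zfun_le a b hadec hbmon
  -- max of z over Fin n
  obtain ⟨s₀, -, hs₀⟩ := Finset.exists_max_image (Finset.univ : Finset (Fin n))
      (fun s : Fin n => z (s : ℕ)) ⟨⟨0, hn⟩, Finset.mem_univ _⟩
  set c : ℝ := z (s₀ : ℕ) with hc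
  -- embedding of columns
  set e : Fin p → Fin n := fun j => τ.symm (Fin.castLE hp j) with he
  have he_inj : Function.Injective e := fun x y hxy => by
    have := τ.symm.injective hxy
    exact Fin.castLE_injective hp this
  have hbe : ∀ j : Fin p, b (e j : ℕ) = mu j := by
    intro j
    rw [hb']
    simp [he, hμt, Fin.castLE]
  set m : Fin p → ℝ := fun j => z (e j : ℕ) - c - a (e j : ℕ) * mu j with hm
  set w : Fin n → ℝ := fun i => c - z ((ρ.symm i : Fin n) : ℕ) with hw
  refine ⟨m, w, ?_, ?_, ?_⟩
  · intro i
    have := hs₀ (ρ.symm i) (Finset.mem_univ _)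
    simp only [hw]
    linarith
  · intro i j
    have hk := key ((ρ.symm i : Fin n) : ℕ) ((e j : Fin n) : ℕ)
    have hlam : lam i = a ((ρ.symm i : Fin n) : ℕ) := by
      rw [ha', Equiv.apply_symm_apply]
    rw [hbe j] at hk
    simp only [hm, hw]
    rw [hlam]
    nlinarith [hk]
  · -- sum bound
    -- g with zero off image
    set g : Fin n → ℝ := fun s => z (s : ℕ) - c - a (s : ℕ) * b (s : ℕ) with hg
    have hme : ∀ j, m j = g (e j) := by
      intro j
      simp only [hm, hg, hbe j]
    have hgz : ∀ s : Fin n, s ∉ Finset.univ.image e → g s = 0 := by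
      intro s hs
      have hps : ¬ ((τ s : Fin n) : ℕ) < p := by
        intro hlt
        apply hs
        refine Finset.mem_image.mpr ⟨⟨(τ s : Fin n), hlt⟩, Finset.mem_univ _, ?_⟩
        simp only [he]
        have : Fin.castLE hp (⟨(τ s : Fin n), hlt⟩ : Fin p) = τ s := by
          ext; simp [Fin.castLE]
        rw [this, Equiv.symm_apply_apply]
      have hb0 : b (s : ℕ) = 0 := by
        rw [hb']
        simp [hμt, hps]
      have hle : z (s : ℕ) ≤ c := hs₀ s (Finset.mem_univ _)
      have hge : c ≤ z (s : ℕ) := by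
        have := key (s₀ : ℕ) (s : ℕ)
        rw [hb0] at this
        simp only [mul_zero] at this
        linarith
      simp only [hg, hb0]
      linarith
    have hsum_m : ∑ j, m j = ∑ s : Fin n, g s := by
      rw [Finset.sum_congr rfl (fun j _ => hme j)]
      rw [← Finset.sum_image (fun x _ y _ h => he_inj h)]
      exact Finset.sum_subset (Finset.subset_univ _) (fun s _ hs => hgz s hs)
    have hsum_w : ∑ i, w i = ∑ s : Fin n, (c - z (s : ℕ)) := by
      simp only [hw]
      exact (Equiv.sum_comp ρ.symm (fun s : Fin n => c - z (s : ℕ)))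
    have htot : ∑ j, m j + ∑ i, w i = - ∑ s : Fin n, a (s : ℕ) * b (s : ℕ) := by
      rw [hsum_m, hsum_w, ← Finset.sum_add_distrib, ← Finset.sum_neg_distrib]
      exact Finset.sum_congr rfl (fun s _ => by simp only [hg]; ring)
    rw [htot, neg_nonpos]
    -- positivity of the diagonal pairing sum
    have hre : ∑ s : Fin n, a (s : ℕ) * b (s : ℕ)
        = ∑ u : Fin n, a ((τ.symm u : Fin n) : ℕ) * μt u := by
      rw [← Equiv.sum_comp τ.symm (fun s : Fin n => a (s : ℕ) * b (s : ℕ))]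
      exact Finset.sum_congr rfl (fun u _ => by rw [hb', Equiv.apply_symm_apply])
    set F : Fin n → ℝ := fun u => a ((τ.symm u : Fin n) : ℕ) * μt u with hF
    have hFze : ∀ u : Fin n, u ∉ Finset.univ.image (Fin.castLE hp) → F u = 0 := by
      intro u hu
      have : ¬ (u : ℕ) < p := by
        intro hlt
        exact hu (Finset.mem_image.mpr ⟨⟨(u : ℕ), hlt⟩, Finset.mem_univ _, by ext; simp [Fin.castLE]⟩)
      simp [hF, hμt, this]
    have : ∑ u : Fin n, F u = ∑ j : Fin p, F (Fin.castLE hp j) := by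
      rw [← Finset.sum_image (fun x _ y _ h => Fin.castLE_injective hp h)]
      exact (Finset.sum_subset (Finset.subset_univ _) (fun s _ hs => hFze s hs)).symm
    rw [hre]
    show 0 ≤ ∑ u : Fin n, F u
    rw [this]
    have hσ : Function.Injective (fun j : Fin p => ρ (τ.symm (Fin.castLE hp j))) := by
      intro x y hxy
      exact Fin.castLE_injective hp (τ.symm.injective (ρ.injective hxy))
    have happ := h _ hσ
    refine le_trans happ (le_of_eq (Finset.sum_congr rfl (fun j _ => ?_)))
    simp only [hF, hμt]
    rw [ha']
    have : ((Fin.castLE hp j : Fin n) : ℕ) < p := by simp [Fin.castLE]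
    rw [dif_pos this]
    have : (⟨((Fin.castLE hp j : Fin n) : ℕ), this⟩ : Fin p) = j := by ext; simp [Fin.castLE]
    rw [this]
    ring


theorem stmt_5 {n p : ℕ} (hp : p ≤ n) (H : Matrix (Fin p) (Fin p) ℝ)
    (Q : Matrix (Fin n) (Fin n) ℝ) (hH : H.IsHermitian) (hQ : Q.IsHermitian) :
    (¬ ∃ X : Matrix (Fin n) (Fin p) ℝ, (H * Xᵀ * Q * X).trace < 0 ∧ Xᵀ * X = 1) ↔
      ∃ (M : Matrix (Fin p) (Fin p) ℝ) (W : Matrix (Fin n) (Fin n) ℝ),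
        M.IsHermitian ∧ W.PosSemidef ∧
        ∀ X : Matrix (Fin n) (Fin p) ℝ,
          0 ≤ (H * Xᵀ * Q * X).trace + (M * (Xᵀ * X - 1)).trace +
              (W * (X * Xᵀ - 1)).trace := by
  obtain ⟨U, hU1, hU2, hQd⟩ := real_spectral Q hQ
  obtain ⟨V, hV1, hV2, hHd⟩ := real_spectral H hH
  set lam : Fin n → ℝ := hQ.eigenvalues with hlam
  set mu : Fin p → ℝ := hH.eigenvalues with hmu
  constructor
  · intro hne
    have hinj : ∀ σ : Fin p → Fin n, Function.Injective σ → 0 ≤ ∑ j, mu j * lam (σ j) := by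
      intro σ hσ
      by_contra hneg
      push_neg at hneg
      set P : Matrix (Fin n) (Fin p) ℝ :=
        Matrix.of fun (i : Fin n) (j : Fin p) => if σ j = i then (1:ℝ) else 0 with hP
      set X : Matrix (Fin n) (Fin p) ℝ := U * P * Vᵀ with hX
      apply hne
      refine ⟨X, ?_, ?_⟩
      · have hY : Uᵀ * X * V = P := by
          rw [hX]
          calc Uᵀ * (U * P * Vᵀ) * V = (Uᵀ * U) * P * (Vᵀ * V) := by
                simp only [Matrix.mul_assoc]
            _ = P := by rw [hU1, hV1, Matrix.one_mul, Matrix.mul_one]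
        have := trans1 U V (diagonal mu) (diagonal lam) X
        rw [hY] at this
        rw [hQd, hHd, ← this, tr1, perm_trace σ lam mu]
        exact hneg
      · rw [hX]
        have : (U * P * Vᵀ)ᵀ = V * (Pᵀ * Uᵀ) := by
          rw [Matrix.transpose_mul, Matrix.transpose_mul, Matrix.transpose_transpose]
        rw [this]
        calc V * (Pᵀ * Uᵀ) * (U * P * Vᵀ) = V * (Pᵀ * ((Uᵀ * U) * (P * Vᵀ))) := by
              simp only [Matrix.mul_assoc]
          _ = V * ((Pᵀ * P) * Vᵀ) := by rw [hU1, Matrix.one_mul, Matrix.mul_assoc]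
          _ = 1 := by rw [perm_orth σ hσ, Matrix.one_mul, hV2]
    obtain ⟨m, w, hw, hfeas, hsum⟩ := core_dual hp lam mu hinj
    refine ⟨V * diagonal m * Vᵀ, U * diagonal w * Uᵀ, ?_, ?_, ?_⟩
    · show _ = _
      rw [Matrix.conjTranspose_eq_transpose_of_trivial, Matrix.transpose_mul,
        Matrix.transpose_mul, Matrix.transpose_transpose, Matrix.diagonal_transpose,
        Matrix.mul_assoc]
    · have hd : (Matrix.diagonal w).PosSemidef := Matrix.PosSemidef.diagonal (fun i => hw i)
      have := hd.mul_mul_conjTranspose_same U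
      rwa [Matrix.conjTranspose_eq_transpose_of_trivial] at this
    · intro X
      have h1 := trans1 U V (diagonal mu) (diagonal lam) X
      have h2 := trans2 U V hU2 hV1 (diagonal m) X
      have h3 := trans3 U V hU1 hV2 (diagonal w) X
      rw [hQd, hHd, ← h1, ← h2, ← h3]
      exact diag_ineq lam mu m w hfeas hsum (Uᵀ * X * V)
  · rintro ⟨M, W, hM, hW, hineq⟩ ⟨X, hlt, hXX⟩
    have h0 : (M * (Xᵀ * X - 1)).trace = 0 := by
      rw [hXX]
      simp
    have h1 := psd_term_nonpos W hW X hXX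
    have h2 := hineq X
    linarith
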